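/- Let X be a metric space and suppose μ is a Borel regular measure, A ⊆ X Borel, α > 0, with S_{μ,ζ_{b,α}} covering A finely, S^α(A) < ∞, μ⌊A ≪ S^α⌊A, and suppose there exist constants 0 < β < α_0 such that Θ^{*α}(μ,x) = β and θ^α(μ,x) = α_0 for all x ∈ A. Then μ(A) = α_0 S^α(A) > t S^α(A) for every t ∈ (β, α_0); in particular the upper centered density β strictly underestimates the ratio μ(A)/S^α(A), showing the constant 1 cannot replace 2^m in Federer's density comparison 2.10.19(1) even for the spherical Hausdorff measure. -/

import Mathlib

open Set Metric MeasureTheory ENNReal Filter Topology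

variable {X : Type*}

section Defs
variable [MetricSpace X] [MeasurableSpace X]

/-- The `δ`-approximating pre-measure `ζ_δ` of the Carathéodory construction built from a
family of sets `S` and a size function `ζ`: the infimum of `∑_j ζ(E_j)` over countable
covers of `R` by members `E_j ∈ S` of diameter at most `δ`. -/
noncomputable def caraPre (S : Set (Set X)) (ζ : Set X → ℝ≥0∞) (δ : ℝ≥0∞) (R : Set X) : ℝ≥0∞ :=
  ⨅ (E : ℕ → Set X) (_ : ∀ n, E n ∈ S ∧ EMetric.diam (E n) ≤ δ) (_ : R ⊆ ⋃ n, E n),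
    ∑' n, ζ (E n)

/-- The Carathéodory approximating measure `ψ_ζ = sup_{δ>0} ζ_δ`. -/
noncomputable def psi (S : Set (Set X)) (ζ : Set X → ℝ≥0∞) (R : Set X) : ℝ≥0∞ :=
  ⨆ (δ : ℝ≥0∞) (_ : 0 < δ), caraPre S ζ δ R

/-- The quotient function `Q_{μ,ζ}`. -/
noncomputable def fedQuot (μ : Measure X) (ζ : Set X → ℝ≥0∞) (T : Set X) : ℝ≥0∞ :=
  if ζ T = 0 then ∞ else if ζ T = ∞ then 0 else μ T / ζ T

/-- The family `S_{μ,ζ}`: members of `S` except those on which `ζ` and `μ` both vanish or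
are both infinite. -/
def adm (μ : Measure X) (S : Set (Set X)) (ζ : Set X → ℝ≥0∞) : Set (Set X) :=
  {T ∈ S | ¬ (ζ T = 0 ∧ μ T = 0) ∧ ¬ (ζ T = ∞ ∧ μ T = ∞)}

/-- A family of sets `𝒮` covers finely at `x` (equivalently, the associated covering
relation is fine at `x`). -/
def Fine (𝒮 : Set (Set X)) (x : X) : Prop :=
  ∀ ε : ℝ≥0∞, 0 < ε → ∃ T ∈ 𝒮, x ∈ T ∧ EMetric.diam T < ε

/-- The Federer density `F^ζ(μ,x)`: the covering limsup of `Q_{μ,ζ}` over members of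
`S_{μ,ζ}` containing `x` with diameter tending to `0`. -/
noncomputable def fedDensity (μ : Measure X) (S : Set (Set X)) (ζ : Set X → ℝ≥0∞) (x : X) :
    ℝ≥0∞ :=
  ⨅ (ε : ℝ≥0∞) (_ : 0 < ε),
    ⨆ (T : Set X) (_ : T ∈ adm μ S ζ ∧ x ∈ T ∧ EMetric.diam T < ε), fedQuot μ ζ T

/-- The size function `ζ_α(T) = c_α diam(T)^α`. -/
noncomputable def sizeDiam (c : ℝ≥0∞) (α : ℝ) (T : Set X) : ℝ≥0∞ :=
  c * EMetric.diam T ^ α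

/-- The enlargement `Ŝ = ⋃ {T ∈ S : T ∩ S ≠ ∅, diam T ≤ 2 diam S}`. -/
def hatSet (S : Set (Set X)) (T : Set X) : Set X :=
  ⋃₀ {U | U ∈ S ∧ (U ∩ T).Nonempty ∧ EMetric.diam U ≤ 2 * EMetric.diam T}

/-- The doubling-type condition on the size function `ζ`: there are constants `c, η > 0`
such that every `S ∈ 𝒮` admits `S̃ ∈ 𝒮` with `Ŝ ⊆ S̃`, `diam S̃ ≤ c diam S` and
`ζ(S̃) ≤ η ζ(S)`. -/
def DoublingSize (S : Set (Set X)) (ζ : Set X → ℝ≥0∞) : Prop :=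
  ∃ c η : ℝ≥0∞, 0 < c ∧ c < ∞ ∧ 0 < η ∧ η < ∞ ∧
    ∀ T ∈ S, ∃ T' ∈ S, hatSet S T ⊆ T' ∧
      EMetric.diam T' ≤ c * EMetric.diam T ∧ ζ T' ≤ η * ζ T

end Defs

/-- The family of all closed balls (with positive radius) of a metric space. -/
def closedBallsF (X : Type*) [MetricSpace X] : Set (Set X) :=
  {T | ∃ (x : X) (r : ℝ), 0 < r ∧ T = Metric.closedBall x r}

/-- The family of all closed subsets of a metric space. -/
def closedSetsF (X : Type*) [MetricSpace X] : Set (Set X) := {T | IsClosed T}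

section DefsM
variable [MetricSpace X] [MeasurableSpace X]

/-- A (outer) measure `μ` is Borel regular if every set is contained in a Borel set of the
same measure. -/
def BorelRegular (μ : Measure X) : Prop :=
  ∀ A : Set X, ∃ B : Set X, MeasurableSet B ∧ A ⊆ B ∧ μ A = μ B

/-- There exists a countable open cover of `X` whose elements have finite `μ`-measure. -/
def SigmaFiniteOpen (μ : Measure X) : Prop :=
  ∃ U : ℕ → Set X, (∀ n, IsOpen (U n)) ∧ (⋃ n, U n) = univ ∧ ∀ n, μ (U n) < ∞

/- The Carathéodory-construction measure `ψ_ζ` as a Borel measure, via the metric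
construction (sets outside the family `S` are given infinite size). -/
open Classical in
noncomputable def psiM [MeasurableSpace X] [BorelSpace X] (S : Set (Set X))
    (ζ : Set X → ℝ≥0∞) : Measure X :=
  Measure.mkMetric' (fun T => if T ∈ S then ζ T else ∞)

/-- The upper (centered) spherical density
`Θ^{*α}(μ,x) = limsup_{r→0⁺} μ(B̄(x,r))/(c_α (2r)^α)`. -/
noncomputable def upperSphDensity (μ : Measure X) (c : ℝ≥0∞) (α : ℝ) (x : X) : ℝ≥0∞ :=
  Filter.limsup
    (fun r : ℝ => μ (Metric.closedBall x r) / (c * ENNReal.ofReal (2 * r) ^ α)) (𝓝[>] 0)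

/-- `X` is diametrically regular: for all `x ∈ X`, `R > 0` there is `δ > 0` such that
`t ↦ diam B(y,t)` is continuous on `(0,δ)` for every `y ∈ B̄(x,R)`. -/
def DiamRegular (X : Type*) [MetricSpace X] : Prop :=
  ∀ x : X, ∀ R > (0:ℝ), ∃ δ > (0:ℝ), ∀ y ∈ Metric.closedBall x R,
    ContinuousOn (fun t : ℝ => Metric.diam (Metric.ball y t)) (Ioo 0 δ)

end DefsM


-- ————— auxiliary development —————
section Aux
variable [MetricSpace X] [MeasurableSpace X] [BorelSpace X]

open Classical in
noncomputable def mS (c : ℝ≥0∞) (α : ℝ) : Set X → ℝ≥0∞ := fun T =>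
  if T ∈ closedBallsF X then sizeDiam c α T else ∞

lemma psiM_eq_mk (c : ℝ≥0∞) (α : ℝ) :
    psiM (closedBallsF X) (sizeDiam c α) = Measure.mkMetric' (mS c α) := rfl

lemma closedBallsF_isClosed {T : Set X} (hT : T ∈ closedBallsF X) : IsClosed T := by
  obtain ⟨x, r, -, rfl⟩ := hT; exact Metric.isClosed_closedBall

lemma closedBallsF_diam_lt_top {T : Set X} (hT : T ∈ closedBallsF X) :
    EMetric.diam T < ∞ := by
  obtain ⟨x, r, hr, rfl⟩ := hT
  refine lt_of_le_of_lt ?_ (lt_top_iff_ne_top.2 (ENNReal.mul_ne_top (by simp)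
    ENNReal.ofReal_ne_top) : (2 * ENNReal.ofReal r : ℝ≥0∞) < ∞)
  rw [← emetric_closedBall hr.le]
  exact EMetric.diam_closedBall

lemma sizeDiam_ne_top {c : ℝ≥0∞} {α : ℝ} (hc' : c < ∞) (hα : 0 < α) {T : Set X}
    (hT : EMetric.diam T < ∞) : sizeDiam c α T ≠ ∞ := by
  unfold sizeDiam
  refine ENNReal.mul_ne_top hc'.ne ?_
  rw [Ne, ENNReal.rpow_eq_top_iff]
  push_neg
  exact ⟨fun _ => by linarith, fun h => absurd h hT.ne⟩

lemma mS_le_of_ball {c : ℝ≥0∞} {α : ℝ} {T : Set X} (hT : T ∈ closedBallsF X) :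
    mS c α T = sizeDiam c α T := by simp [mS, hT]

/-- Lower bound on `pre` from a measure comparison on balls. -/
lemma measure_le_mul_pre (μ : Measure X) {c : ℝ≥0∞} {α : ℝ} {lam r : ℝ≥0∞}
    (hlam0 : lam ≠ 0) (hlam : lam ≠ ∞) (B : Set X)
    (hB : ∀ T ∈ closedBallsF X, (T ∩ B).Nonempty → EMetric.diam T ≤ r →
      μ T ≤ lam * sizeDiam c α T) :
    μ B ≤ lam * OuterMeasure.mkMetric'.pre (mS c α) r B := by
  classical
  have key : μ B / lam ≤ OuterMeasure.mkMetric'.pre (mS c α) r B := by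
    rw [OuterMeasure.mkMetric'.pre, OuterMeasure.boundedBy_apply]
    refine le_iInf fun t => le_iInf fun hcov => ?_
    rw [ENNReal.div_le_iff_le_mul (Or.inl hlam0) (Or.inl hlam)]
    have hsub : B ⊆ ⋃ n, (if (t n ∩ B).Nonempty then t n else ∅) := by
      intro x hx
      obtain ⟨n, hn⟩ := mem_iUnion.1 (hcov hx)
      refine mem_iUnion.2 ⟨n, ?_⟩
      rw [if_pos ⟨x, hn, hx⟩]; exact hn
    calc μ B ≤ ∑' n, μ (if (t n ∩ B).Nonempty then t n else ∅) :=
          (measure_mono hsub).trans (measure_iUnion_le _)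
      _ ≤ ∑' n, (⨆ _ : (t n).Nonempty, extend (fun s (_ : EMetric.diam s ≤ r) => mS c α s)
            (t n)) * lam := ?_
      _ = (∑' n, ⨆ _ : (t n).Nonempty, extend (fun s (_ : EMetric.diam s ≤ r) => mS c α s)
            (t n)) * lam := ENNReal.tsum_mul_right
    refine ENNReal.tsum_le_tsum fun n => ?_
    by_cases hne : (t n ∩ B).Nonempty
    · rw [if_pos hne, iSup_pos (hne.mono inter_subset_left)]
      by_cases hd : EMetric.diam (t n) ≤ r
      · have hext : extend (fun s (_ : EMetric.diam s ≤ r) => mS (X := X) c α s) (t n)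
            = mS c α (t n) :=
          @extend_eq (Set X) (fun s => EMetric.diam s ≤ r) (fun s _ => mS c α s) (t n) hd
        rw [hext]
        by_cases hball : t n ∈ closedBallsF X
        · rw [mS_le_of_ball hball, mul_comm]
          exact hB _ hball hne hd
        · rw [mS]; simp only [if_neg hball]
          rw [ENNReal.top_mul hlam0]; exact le_top
      · have hext : extend (fun s (_ : EMetric.diam s ≤ r) => mS (X := X) c α s) (t n)
            = ∞ :=
          @extend_eq_top (Set X) (fun s => EMetric.diam s ≤ r) (fun s _ => mS c α s) (t n) hd
        rw [hext, ENNReal.top_mul hlam0]; exact le_top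
    · rw [if_neg hne]; simp
  calc μ B = lam * (μ B / lam) := (ENNReal.mul_div_cancel hlam0 hlam).symm
    _ ≤ _ := mul_le_mul_right key _

lemma pre_le_psiM {c : ℝ≥0∞} {α : ℝ} {r : ℝ≥0∞} (hr : 0 < r) (s : Set X) :
    OuterMeasure.mkMetric'.pre (mS c α) r s ≤ psiM (closedBallsF X) (sizeDiam c α) s := by
  rw [psiM_eq_mk]
  have h1 : OuterMeasure.mkMetric'.pre (mS c α) r ≤ OuterMeasure.mkMetric' (mS c α) :=
    le_iSup₂ (f := fun (r' : ℝ≥0∞) (_ : 0 < r') =>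
      OuterMeasure.mkMetric'.pre (mS (X := X) c α) r') r hr
  calc OuterMeasure.mkMetric'.pre (mS c α) r s ≤ OuterMeasure.mkMetric' (mS c α) s := h1 s
    _ ≤ (OuterMeasure.mkMetric' (mS c α)).trim s := OuterMeasure.le_trim _ s
    _ = (Measure.mkMetric' (mS c α)).toOuterMeasure s := by
        rw [Measure.mkMetric'_toOuterMeasure]
    _ = Measure.mkMetric' (mS c α) s := Measure.toOuterMeasure_apply _ _

end Aux

-- continuation: upper bound
section Aux2
variable [MetricSpace X] [MeasurableSpace X] [BorelSpace X]

lemma fed_lt_extract (μ : Measure X) {c : ℝ≥0∞} {α : ℝ} {lam : ℝ≥0∞} {x : X}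
    (hlam : lam ≠ ∞)
    (hx : fedDensity μ (closedBallsF X) (sizeDiam c α) x < lam) :
    ∃ ε : ℝ≥0∞, 0 < ε ∧ ∀ T ∈ closedBallsF X, x ∈ T → EMetric.diam T < ε →
      μ T ≤ lam * sizeDiam c α T := by
  rw [fedDensity, iInf_lt_iff] at hx
  obtain ⟨ε, hx⟩ := hx
  rw [iInf_lt_iff] at hx
  obtain ⟨hε, hx⟩ := hx
  refine ⟨ε, hε, fun T hT hxT hTd => ?_⟩
  by_cases hadm : T ∈ adm μ (closedBallsF X) (sizeDiam c α)
  · have hq : fedQuot μ (sizeDiam c α) T < lam :=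
      lt_of_le_of_lt (le_iSup₂ (f := fun (T : Set X)
        (_ : T ∈ adm μ (closedBallsF X) (sizeDiam c α) ∧ x ∈ T ∧ EMetric.diam T < ε) =>
        fedQuot μ (sizeDiam c α) T) T ⟨hadm, hxT, hTd⟩) hx
    rw [fedQuot] at hq
    by_cases h0 : sizeDiam c α T = 0
    · rw [if_pos h0] at hq; exact absurd hq (by simp)
    by_cases htop : sizeDiam c α T = ∞
    · rw [htop, ENNReal.mul_top (by rintro rfl; exact absurd hx (by simp))]; exact le_top
    · rw [if_neg h0, if_neg htop] at hq
      exact le_of_lt ((ENNReal.div_lt_iff (Or.inl h0) (Or.inl htop)).1 hq)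
  · rw [adm, mem_setOf_eq] at hadm
    have hp : ¬(¬(sizeDiam c α T = 0 ∧ μ T = 0) ∧ ¬(sizeDiam c α T = ∞ ∧ μ T = ∞)) :=
      fun hh => hadm ⟨hT, hh⟩
    rcases not_and_or.1 hp with h | h
    · rcases not_not.1 h with ⟨-, hμ0⟩
      rw [hμ0]; exact zero_le
    · rcases not_not.1 h with ⟨hζ, -⟩
      rw [hζ, ENNReal.mul_top (by rintro rfl; exact absurd hx (by simp))]; exact le_top

lemma fed_gt_extract (μ : Measure X) {c : ℝ≥0∞} {α : ℝ} {lam α₀ : ℝ≥0∞} {x : X}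
    (hlam : lam < α₀)
    (hx : fedDensity μ (closedBallsF X) (sizeDiam c α) x = α₀) {ε : ℝ≥0∞} (hε : 0 < ε) :
    ∃ T ∈ closedBallsF X, x ∈ T ∧ EMetric.diam T < ε ∧
      lam * sizeDiam c α T ≤ μ T ∧ 0 < μ T := by
  have hsup : lam < ⨆ (T : Set X)
      (_ : T ∈ adm μ (closedBallsF X) (sizeDiam c α) ∧ x ∈ T ∧ EMetric.diam T < ε),
      fedQuot μ (sizeDiam c α) T := by
    refine lt_of_lt_of_le hlam ?_
    rw [← hx, fedDensity]
    exact iInf₂_le ε hε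
  rw [lt_iSup_iff] at hsup
  obtain ⟨T, hsup⟩ := hsup
  rw [lt_iSup_iff] at hsup
  obtain ⟨⟨hadm, hxT, hTd⟩, hq⟩ := hsup
  obtain ⟨hTb, hnz, -⟩ := hadm
  refine ⟨T, hTb, hxT, hTd, ?_, ?_⟩
  · rw [fedQuot] at hq
    by_cases h0 : sizeDiam c α T = 0
    · rw [h0, mul_zero]; exact zero_le
    by_cases htop : sizeDiam c α T = ∞
    · rw [if_neg h0, if_pos htop] at hq; exact absurd hq (by simp)
    · rw [if_neg h0, if_neg htop] at hq
      exact le_of_lt ((ENNReal.lt_div_iff_mul_lt (Or.inl h0) (Or.inl htop)).1 hq)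
  · rw [fedQuot] at hq
    by_cases h0 : sizeDiam c α T = 0
    · rcases (not_and_or.1 hnz) with h | h
      · exact absurd h0 h
      · exact pos_iff_ne_zero.2 h
    by_cases htop : sizeDiam c α T = ∞
    · rw [if_neg h0, if_pos htop] at hq; exact absurd hq (by simp)
    · rw [if_neg h0, if_neg htop] at hq
      have : μ T / sizeDiam c α T ≠ 0 := fun hh => by simp [hh] at hq
      rw [Ne, ENNReal.div_eq_zero_iff, not_or] at this
      exact pos_iff_ne_zero.2 this.1

lemma mu_le_mul_psi (μ : Measure X) {c : ℝ≥0∞} {α : ℝ} {A : Set X} {α₀ lam : ℝ≥0∞}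
    (hlam : α₀ < lam) (hlamtop : lam ≠ ∞) (hlam0 : lam ≠ 0)
    (hfed : ∀ x ∈ A, fedDensity μ (closedBallsF X) (sizeDiam c α) x = α₀) :
    μ A ≤ lam * psiM (closedBallsF X) (sizeDiam c α) A := by
  set ψ := psiM (closedBallsF X) (sizeDiam c α) with hψ
  set Ak : ℕ → Set X := fun k => {x ∈ A | ∀ T ∈ closedBallsF X, x ∈ T →
    EMetric.diam T < ((k : ℝ≥0∞))⁻¹ → μ T ≤ lam * sizeDiam c α T} with hAk
  have hmono : Monotone Ak := by
    intro k j hkj x hxk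
    refine ⟨hxk.1, fun T hT hxT hd => hxk.2 T hT hxT (lt_of_lt_of_le hd ?_)⟩
    exact ENNReal.inv_le_inv.2 (by exact_mod_cast Nat.cast_le.2 hkj)
  have hcup : A ⊆ ⋃ k, Ak k := by
    intro x hx
    have hlt : fedDensity μ (closedBallsF X) (sizeDiam c α) x < lam := by
      rw [hfed x hx]; exact hlam
    obtain ⟨ε, hε, hb⟩ := fed_lt_extract μ hlamtop hlt
    obtain ⟨n, hn⟩ := ENNReal.exists_inv_nat_lt hε.ne'
    exact mem_iUnion.2 ⟨n, hx, fun T hT hxT hd => hb T hT hxT (hd.trans hn)⟩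
  have hAkle : ∀ k : ℕ, μ (Ak k) ≤ lam * ψ A := by
    intro k
    have hr : (0 : ℝ≥0∞) < (((2 * k + 2 : ℕ) : ℝ≥0∞))⁻¹ := by
      rw [ENNReal.inv_pos]; exact ENNReal.natCast_ne_top _
    have hrk : (((2 * k + 2 : ℕ) : ℝ≥0∞))⁻¹ < ((k : ℝ≥0∞))⁻¹ := by
      refine ENNReal.inv_lt_inv.2 ?_
      exact_mod_cast (by omega : k < 2 * k + 2)
    have h1 : μ (Ak k) ≤ lam * OuterMeasure.mkMetric'.pre (mS c α)
        (((2 * k + 2 : ℕ) : ℝ≥0∞))⁻¹ (Ak k) := by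
      refine measure_le_mul_pre μ hlam0 hlamtop _ fun T hT ⟨y, hyT, hyAk⟩ hd => ?_
      exact hyAk.2 T hT hyT (lt_of_le_of_lt hd hrk)
    refine h1.trans (mul_le_mul_right ((pre_le_psiM hr _).trans (measure_mono fun y hy => hy.1)) _)
  have hμA : μ A ≤ ⨆ k, μ (Ak k) := by
    set Bk : ℕ → Set X := fun k => ⋂ (j : ℕ) (_ : k ≤ j), toMeasurable μ (Ak j) with hBk
    have hBmeas : ∀ k, MeasurableSet (Bk k) :=
      fun k => MeasurableSet.iInter fun j => MeasurableSet.iInter fun _ =>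
        measurableSet_toMeasurable μ _
    have hBmono : Monotone Bk := by
      intro k j hkj
      exact biInter_subset_biInter_left fun i hi => hkj.trans hi
    have hsub : A ⊆ ⋃ k, Bk k := by
      refine hcup.trans (iUnion_mono fun k => ?_)
      exact subset_iInter₂ fun j hj => (hmono hj).trans (subset_toMeasurable μ _)
    calc μ A ≤ μ (⋃ k, Bk k) := measure_mono hsub
      _ = ⨆ k, μ (Bk k) := hBmono.measure_iUnion
      _ ≤ ⨆ k, μ (Ak k) := by
          refine iSup_mono fun k => ?_
          calc μ (Bk k) ≤ μ (toMeasurable μ (Ak k)) :=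
                measure_mono (iInter₂_subset k le_rfl)
            _ = μ (Ak k) := measure_toMeasurable _
  exact hμA.trans (iSup_le hAkle)

lemma mu_le_alpha_psi (μ : Measure X) {c : ℝ≥0∞} {α : ℝ} {A : Set X} {α₀ : ℝ≥0∞}
    (hα₀ : α₀ < ∞)
    (hfed : ∀ x ∈ A, fedDensity μ (closedBallsF X) (sizeDiam c α) x = α₀)
    (hfin : psiM (closedBallsF X) (sizeDiam c α) A < ∞)
    (hpos : 0 < psiM (closedBallsF X) (sizeDiam c α) A) :
    μ A ≤ α₀ * psiM (closedBallsF X) (sizeDiam c α) A := by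
  set ψ := psiM (closedBallsF X) (sizeDiam c α) with hψ
  refine ENNReal.le_of_forall_pos_le_add fun ε hε hlt => ?_
  have hψ0 : ψ A ≠ 0 := hpos.ne'
  have hψtop : ψ A ≠ ∞ := hfin.ne
  set lam := α₀ + (ε : ℝ≥0∞) / ψ A with hlam
  have hd0 : (ε : ℝ≥0∞) / ψ A ≠ 0 := ENNReal.div_ne_zero.2 ⟨by exact_mod_cast hε.ne', hψtop⟩
  have hlamgt : α₀ < lam := lt_add_right hα₀.ne hd0
  have hlamtop : lam ≠ ∞ := by
    refine ENNReal.add_ne_top.2 ⟨hα₀.ne, ?_⟩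
    exact (ENNReal.div_lt_top ENNReal.coe_ne_top hψ0).ne
  have hlam0 : lam ≠ 0 := by
    intro h; rw [hlam, add_eq_zero] at h; exact hd0 h.2
  calc μ A ≤ lam * ψ A := mu_le_mul_psi μ hlamgt hlamtop hlam0 hfed
    _ = α₀ * ψ A + (ε : ℝ≥0∞) / ψ A * ψ A := by rw [hlam, add_mul]
    _ = α₀ * ψ A + ε := by rw [ENNReal.div_mul_cancel hψ0 hψtop]

end Aux2

-- tail sum lemma
lemma tsum_tail_le (f : ℕ → ℝ≥0∞) (N : ℕ) :
    ∑' i, (if i < N then 0 else f i) ≤ ∑' k, f (k + N) := by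
  have h : ∑' k, (if k + N < N then 0 else f (k + N)) = ∑' i, (if i < N then 0 else f i) := by
    refine Function.Injective.tsum_eq (g := fun k => k + N)
      (f := fun i => if i < N then 0 else f i) (add_left_injective N) ?_
    intro x hx
    simp only [Function.mem_support] at hx
    have : ¬ x < N := fun hlt => hx (by simp [hlt])
    exact ⟨x - N, by simp; omega⟩
  rw [← h]
  refine Summable.tsum_le_tsum (fun k => ?_) ENNReal.summable ENNReal.summable
  simp [Nat.not_lt.2 (Nat.le_add_left N k)]

open Classical in
noncomputable def vseq {X : Type*} [MetricSpace X] (F : Set (Set X)) : ℕ → Set X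
  | n =>
    if h : ∃ T : Set X, (T ∈ F ∧ ∀ m, m < n → Disjoint T (vseq F m)) ∧
        (⨆ T' ∈ {U : Set X | U ∈ F ∧ ∀ m, m < n → Disjoint U (vseq F m)},
          EMetric.diam T') / 2 < EMetric.diam T
    then h.choose else ∅
  termination_by n => n
  decreasing_by all_goals omega

section VseqLemmas
variable {Y : Type*} [MetricSpace Y] (F : Set (Set Y))

open Classical in
lemma vseq_def (n : ℕ) :
    vseq F n = if h : ∃ T : Set Y, (T ∈ F ∧ ∀ m, m < n → Disjoint T (vseq F m)) ∧
        (⨆ T' ∈ {U : Set Y | U ∈ F ∧ ∀ m, m < n → Disjoint U (vseq F m)},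
          EMetric.diam T') / 2 < EMetric.diam T
    then h.choose else ∅ := by
  rw [vseq]

lemma vseq_cases (n : ℕ) :
    vseq F n = ∅ ∨ ((vseq F n ∈ F ∧ ∀ m, m < n → Disjoint (vseq F n) (vseq F m)) ∧
      (⨆ T' ∈ {U : Set Y | U ∈ F ∧ ∀ m, m < n → Disjoint U (vseq F m)},
        EMetric.diam T') / 2 < EMetric.diam (vseq F n)) := by
  rw [vseq_def]
  split
  · next h => exact Or.inr h.choose_spec
  · exact Or.inl rfl

lemma vseq_spec {n : ℕ} {T₀ : Set Y}
    (hT₀ : T₀ ∈ F ∧ ∀ m, m < n → Disjoint T₀ (vseq F m))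
    (hd : (⨆ T' ∈ {U : Set Y | U ∈ F ∧ ∀ m, m < n → Disjoint U (vseq F m)},
        EMetric.diam T') / 2 < EMetric.diam T₀) :
    (vseq F n ∈ F ∧ ∀ m, m < n → Disjoint (vseq F n) (vseq F m)) ∧
      (⨆ T' ∈ {U : Set Y | U ∈ F ∧ ∀ m, m < n → Disjoint U (vseq F m)},
        EMetric.diam T') / 2 < EMetric.diam (vseq F n) := by
  rcases vseq_cases F n with h | h
  · exfalso
    rw [vseq_def] at h
    rw [dif_pos ⟨T₀, hT₀, hd⟩] at h
    have hspec := (⟨T₀, hT₀, hd⟩ : ∃ T : Set Y, (T ∈ F ∧ ∀ m, m < n →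
      Disjoint T (vseq F m)) ∧ (⨆ T' ∈ {U : Set Y | U ∈ F ∧ ∀ m, m < n →
        Disjoint U (vseq F m)}, EMetric.diam T') / 2 < EMetric.diam T).choose_spec
    rw [h] at hspec
    exact absurd hspec.2 (by simp [EMetric.diam])
  · exact h

lemma vseq_pairwise_disjoint : Pairwise (Function.onFun Disjoint (vseq F)) := by
  have key : ∀ m n, m < n → Disjoint (vseq F n) (vseq F m) := by
    intro m n hmn
    rcases vseq_cases F n with h | h
    · rw [h]; exact empty_disjoint _
    · exact h.1.2 m hmn
  intro m n hmn
  rcases lt_or_gt_of_ne hmn with h | h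
  · exact (key m n h).symm
  · exact key n m h

end VseqLemmas

section Aux3
variable [MetricSpace X] [MeasurableSpace X] [BorelSpace X]

lemma psiM_singleton {c : ℝ≥0∞} {α : ℝ} (hα : 0 < α) (hc' : c < ∞) (x : X) :
    psiM (closedBallsF X) (sizeDiam c α) {x} = 0 := by
  have hx : psiM (closedBallsF X) (sizeDiam c α) {x}
      = OuterMeasure.mkMetric' (mS c α) {x} := by
    rw [psiM_eq_mk, ← Measure.toOuterMeasure_apply, Measure.mkMetric'_toOuterMeasure,
      OuterMeasure.trim_eq _ (measurableSet_singleton x)]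
  rw [hx, OuterMeasure.mkMetric']
  simp only [OuterMeasure.iSup_apply]
  refine le_antisymm (iSup₂_le fun r hr => ?_) (zero_le)
  have h1 : Tendsto (fun s : ℝ => (2 : ℝ≥0∞) * ENNReal.ofReal s) (𝓝[>] (0:ℝ)) (𝓝 0) := by
    have h0 : Tendsto (fun s : ℝ => ENNReal.ofReal s) (𝓝[>] (0:ℝ)) (𝓝 (ENNReal.ofReal 0)) :=
      ENNReal.tendsto_ofReal (tendsto_id.mono_left nhdsWithin_le_nhds)
    have := ENNReal.Tendsto.const_mul (a := (2:ℝ≥0∞)) h0 (Or.inr (by simp))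
    simpa using this
  have htend : Tendsto (fun s : ℝ => c * ((2 : ℝ≥0∞) * ENNReal.ofReal s) ^ α)
      (𝓝[>] (0:ℝ)) (𝓝 0) := by
    have h2 : Tendsto (fun s : ℝ => ((2 : ℝ≥0∞) * ENNReal.ofReal s) ^ α)
        (𝓝[>] (0:ℝ)) (𝓝 0) := by
      have := (ENNReal.continuous_rpow_const (y := α)).tendsto 0 |>.comp h1
      simpa [ENNReal.zero_rpow_of_pos hα, Function.comp_def] using this
    have := ENNReal.Tendsto.const_mul (a := c) h2 (Or.inr hc'.ne)
    simpa using this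
  have hbound : ∀ᶠ s in 𝓝[>] (0:ℝ),
      OuterMeasure.mkMetric'.pre (mS c α) r {x} ≤ c * ((2:ℝ≥0∞) * ENNReal.ofReal s) ^ α := by
    have hev1 : ∀ᶠ s in 𝓝[>] (0:ℝ), (2:ℝ≥0∞) * ENNReal.ofReal s < r :=
      h1.eventually_lt_const hr
    filter_upwards [hev1, self_mem_nhdsWithin] with s hs hs0
    have hdiam : EMetric.diam (closedBall x s) ≤ (2:ℝ≥0∞) * ENNReal.ofReal s := by
      rw [← emetric_closedBall (le_of_lt hs0)]
      exact EMetric.diam_closedBall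
    calc OuterMeasure.mkMetric'.pre (mS c α) r {x}
        ≤ OuterMeasure.mkMetric'.pre (mS c α) r (closedBall x s) :=
          measure_mono (singleton_subset_iff.2 (mem_closedBall_self (le_of_lt hs0)))
      _ ≤ mS c α (closedBall x s) :=
          OuterMeasure.mkMetric'.pre_le (hdiam.trans hs.le)
      _ = sizeDiam c α (closedBall x s) := mS_le_of_ball ⟨x, s, hs0, rfl⟩
      _ ≤ c * ((2:ℝ≥0∞) * ENNReal.ofReal s) ^ α :=
          mul_le_mul_right (ENNReal.rpow_le_rpow hdiam hα.le) c
  simpa using ge_of_tendsto htend hbound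

lemma psiM_countable_null {c : ℝ≥0∞} {α : ℝ} (hα : 0 < α) (hc' : c < ∞) {P : Set X}
    (hP : P.Countable) : psiM (closedBallsF X) (sizeDiam c α) P = 0 := by
  have : P = ⋃ x ∈ P, {x} := (biUnion_of_singleton P).symm
  rw [this]
  exact (measure_biUnion_null_iff hP).2 fun x _ => psiM_singleton hα hc' x

end Aux3

section Aux4
variable [MetricSpace X] [MeasurableSpace X] [BorelSpace X]

lemma lower_piece (μ : Measure X) {c : ℝ≥0∞} {α : ℝ} (hα : 0 < α) (hc : 0 < c) (hc' : c < ∞)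
    {A A' U : Set X} {α₀ lam : ℝ≥0∞}
    (hA'm : MeasurableSet A') (hA'A : A' ⊆ A) (hA'U : A' ⊆ U) (hUo : IsOpen U)
    (hUfin : μ U ≠ ∞)
    (hlam : lam < α₀) (hlam0 : lam ≠ 0) (hlamtop : lam ≠ ∞)
    (hfed : ∀ x ∈ A, fedDensity μ (closedBallsF X) (sizeDiam c α) x = α₀) :
    lam * psiM (closedBallsF X) (sizeDiam c α) A' ≤ μ A' := by
  classical
  set ψ := psiM (closedBallsF X) (sizeDiam c α) with hψdef
  haveI : IsFiniteMeasure (μ.restrict U) :=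
    ⟨by rw [Measure.restrict_apply_univ]; exact lt_top_iff_ne_top.2 hUfin⟩
  -- the atoms
  set P : Set X := {x | x ∈ U ∧ μ {x} ≠ 0} with hPdef
  have hPc : P.Countable := by
    have hcnt := Measure.countable_meas_pos_of_disjoint_iUnion (μ := μ.restrict U)
      (As := fun x : X => {x}) (fun x => measurableSet_singleton x)
      (fun i j hij => by simp [Function.onFun, hij])
    refine Countable.mono ?_ hcnt
    intro x hx
    have : (μ.restrict U) {x} = μ {x} := by
      rw [Measure.restrict_apply (measurableSet_singleton x),
        inter_eq_self_of_subset_left (singleton_subset_iff.2 hx.1)]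
    simp only [mem_setOf_eq, this]
    exact pos_iff_ne_zero.2 hx.2
  set A'' : Set X := A' \ P with hA''def
  have hA''m : MeasurableSet A'' := hA'm.diff hPc.measurableSet
  have hA''U : A'' ⊆ U := fun x hx => hA'U hx.1
  have hψA' : ψ A' ≤ ψ A'' := by
    have h1 : A' ⊆ A'' ∪ (A' ∩ P) := fun x hx => by
      by_cases hxP : x ∈ P
      · exact Or.inr ⟨hx, hxP⟩
      · exact Or.inl ⟨hx, hxP⟩
    calc ψ A' ≤ ψ (A'' ∪ (A' ∩ P)) := measure_mono h1
      _ ≤ ψ A'' + ψ (A' ∩ P) := measure_union_le _ _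
      _ ≤ ψ A'' + ψ P := by
          exact add_le_add_right (measure_mono inter_subset_right) _
      _ = ψ A'' := by rw [psiM_countable_null hα hc' hPc, add_zero]
  -- main estimate
  have key : ∀ ε : ℝ≥0∞, ε ≠ 0 → ψ A'' ≤ lam⁻¹ * (μ A'' + ε) := by
    intro ε hε
    by_cases hεtop : ε = ∞
    · rw [hεtop, add_top, ENNReal.mul_top (ENNReal.inv_ne_zero.2 hlamtop)]
      exact le_top
    have hrA'' : (μ.restrict U) A'' ≠ ∞ := (measure_lt_top _ _).ne
    obtain ⟨V, hVsub, hVo, hVlt⟩ := Measure.OuterRegular.outerRegular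
      (μ := μ.restrict U) hA''m (r := (μ.restrict U) A'' + ε)
      (lt_add_right hrA'' hε)
    set W := V ∩ U with hWdef
    have hWo : IsOpen W := hVo.inter hUo
    have hA''W : A'' ⊆ W := fun x hx => ⟨hVsub hx, hA''U hx⟩
    have hμW : μ W ≤ μ A'' + ε := by
      have h1 : μ W = (μ.restrict U) V := by
        rw [Measure.restrict_apply hVo.measurableSet]
      have h2 : (μ.restrict U) A'' = μ A'' := by
        rw [Measure.restrict_apply hA''m, inter_eq_self_of_subset_left hA''U]
      rw [h1, ← h2]
      exact hVlt.le
    have hμWfin : μ W ≠ ∞ := (hμW.trans_lt (by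
      refine ENNReal.add_lt_top.2 ⟨?_, ?_⟩
      · exact lt_of_le_of_lt (measure_mono hA''U) (lt_top_iff_ne_top.2 hUfin)
      · exact lt_top_iff_ne_top.2 hεtop)).ne
    suffices hpre : ∀ r : ℝ≥0∞, 0 < r →
        OuterMeasure.mkMetric'.pre (mS c α) r A'' ≤ lam⁻¹ * μ W by
      have hpsi : ψ A'' = OuterMeasure.mkMetric' (mS c α) A'' := by
        rw [hψdef, psiM_eq_mk, ← Measure.toOuterMeasure_apply,
          Measure.mkMetric'_toOuterMeasure, OuterMeasure.trim_eq _ hA''m]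
      rw [hpsi, OuterMeasure.mkMetric']
      simp only [OuterMeasure.iSup_apply]
      exact (iSup₂_le fun r hr => hpre r hr).trans (mul_le_mul_right hμW _)
    intro r hr
    set Δ := min 1 (r / 6) with hΔdef
    have hΔ0 : 0 < Δ := lt_min one_pos (ENNReal.div_pos hr.ne' (by simp))
    have hΔ1 : Δ ≤ 1 := min_le_left _ _
    have hΔtop : Δ ≠ ∞ := (hΔ1.trans_lt ENNReal.one_lt_top).ne
    have h6Δ : 6 * Δ ≤ r := by
      calc (6:ℝ≥0∞) * Δ ≤ 6 * (r / 6) := mul_le_mul_right (min_le_right _ _) _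
        _ = r := ENNReal.mul_div_cancel (by simp) (by simp)
    set Fam : Set (Set X) := {T | T ∈ closedBallsF X ∧ T ⊆ W ∧ EMetric.diam T ≤ Δ ∧
      0 < EMetric.diam T ∧ lam * sizeDiam c α T ≤ μ T ∧ 0 < μ T} with hFamdef
    have hfine : ∀ x ∈ A'', ∀ δ : ℝ≥0∞, 0 < δ → ∃ T ∈ Fam, x ∈ T ∧ EMetric.diam T < δ := by
      intro x hx δ hδ
      have hxA : x ∈ A := hA'A hx.1
      have hxW : x ∈ W := hA''W hx
      obtain ⟨ρ, hρ0, hρsub⟩ := Metric.isOpen_iff.1 hWo x hxW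
      have hε₀pos : 0 < min (min δ Δ) (ENNReal.ofReal ρ) :=
        lt_min (lt_min hδ hΔ0) (ENNReal.ofReal_pos.2 hρ0)
      obtain ⟨T, hTb, hxT, hTd, hTμ, hTpos⟩ := fed_gt_extract μ hlam (hfed x hxA) hε₀pos
      have hTW : T ⊆ W := by
        intro y hy
        refine hρsub (mem_ball.2 ?_)
        have h1 : edist y x ≤ EMetric.diam T := EMetric.edist_le_diam_of_mem hy hxT
        have h2 : EMetric.diam T < ENNReal.ofReal ρ := hTd.trans_le (min_le_right _ _)
        exact edist_lt_ofReal.1 (h1.trans_lt h2)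
      have hTdiam : 0 < EMetric.diam T := by
        by_contra h0
        have hd0 : EMetric.diam T = 0 := le_antisymm (not_lt.1 h0) (zero_le)
        have hsub : T ⊆ {x} := by
          intro z hz
          have hz1 : edist z x ≤ 0 := hd0 ▸ EMetric.edist_le_diam_of_mem hz hxT
          have : z = x := by simpa [edist_eq_zero] using le_antisymm hz1 (zero_le)
          simp [this]
        have hx0 : μ {x} = 0 := by
          have hxU : x ∈ U := hA''U hx
          by_contra hne
          exact hx.2 ⟨hxU, hne⟩
        exact hTpos.ne' ((le_antisymm ((measure_mono hsub).trans_eq hx0) (zero_le)))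
      refine ⟨T, ⟨hTb, hTW, ?_, hTdiam, hTμ, hTpos⟩, hxT,
        hTd.trans_le ((min_le_left _ _).trans (min_le_left _ _))⟩
      exact le_of_lt (hTd.trans_le ((min_le_left _ _).trans (min_le_right _ _)))
    set G : ℕ → Set X := vseq Fam with hGdef
    have hGface : ∀ n, G n = ∅ ∨ G n ∈ Fam :=
      fun n => (vseq_cases Fam n).imp id (fun h => h.1.1)
    have hGdisj : Pairwise (Function.onFun Disjoint G) := vseq_pairwise_disjoint Fam
    have hGclosed : ∀ n, IsClosed (G n) := by
      intro n; rcases hGface n with h|h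
      · rw [h]; exact isClosed_empty
      · exact closedBallsF_isClosed h.1
    have hGmeas : ∀ n, MeasurableSet (G n) := fun n => (hGclosed n).measurableSet
    have hGW : ∀ n, G n ⊆ W := by
      intro n; rcases hGface n with h|h
      · rw [h]; exact empty_subset _
      · exact h.2.1
    have hGsum : ∑' n, μ (G n) ≤ μ W := by
      rw [← measure_iUnion hGdisj hGmeas]
      exact measure_mono (iUnion_subset hGW)
    have hGdΔ : ∀ n, EMetric.diam (G n) ≤ Δ := by
      intro n; rcases hGface n with h|h
      · rw [h]; simp [EMetric.diam]
      · exact h.2.2.1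
    have hGμ : ∀ n, sizeDiam c α (G n) ≤ lam⁻¹ * μ (G n) := by
      intro n; rcases hGface n with h|h
      · rw [h]
        have : sizeDiam c α (∅ : Set X) = 0 := by
          simp [sizeDiam, EMetric.diam, EMetric.diam_empty, ENNReal.zero_rpow_of_pos hα]
        rw [this]; exact zero_le
      · have h1 := h.2.2.2.2.1
        calc sizeDiam c α (G n) = lam⁻¹ * (lam * sizeDiam c α (G n)) := by
              rw [← mul_assoc, ENNReal.inv_mul_cancel hlam0 hlamtop, one_mul]
          _ ≤ lam⁻¹ * μ (G n) := mul_le_mul_right h1 _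
    set E : ℕ → Set X := fun n => if h : (G n).Nonempty then
      closedBall h.some (3 * (EMetric.diam (G n)).toReal) else ∅ with hEdef
    have havail : ∀ (T' : Set X), T' ∈ Fam → ∀ j : ℕ, (∀ m, m < j → Disjoint T' (G m)) →
        ((G j ∈ Fam ∧ ∀ m, m < j → Disjoint (G j) (vseq Fam m)) ∧
          EMetric.diam T' / 2 < EMetric.diam (G j)) := by
      intro T' hT' j hdisj
      have hmem : T' ∈ {U₁ : Set X | U₁ ∈ Fam ∧ ∀ m, m < j → Disjoint U₁ (vseq Fam m)} :=
        ⟨hT', hdisj⟩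
      have hsle : (⨆ T'' ∈ {U₁ : Set X | U₁ ∈ Fam ∧ ∀ m, m < j →
          Disjoint U₁ (vseq Fam m)}, EMetric.diam T'') ≤ Δ :=
        iSup₂_le fun U₁ hU => hU.1.2.2.1
      have hT'le : EMetric.diam T' ≤ ⨆ T'' ∈ {U₁ : Set X | U₁ ∈ Fam ∧ ∀ m, m < j →
          Disjoint U₁ (vseq Fam m)}, EMetric.diam T'' :=
        le_iSup₂ (f := fun (U₁ : Set X) (_ : U₁ ∈ {U₁ : Set X | U₁ ∈ Fam ∧ ∀ m, m < j →
          Disjoint U₁ (vseq Fam m)}) => EMetric.diam U₁) T' hmem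
      have hspos : (0:ℝ≥0∞) < ⨆ T'' ∈ {U₁ : Set X | U₁ ∈ Fam ∧ ∀ m, m < j →
          Disjoint U₁ (vseq Fam m)}, EMetric.diam T'' :=
        lt_of_lt_of_le hT'.2.2.2.1 hT'le
      have hhalf : (⨆ T'' ∈ {U₁ : Set X | U₁ ∈ Fam ∧ ∀ m, m < j →
            Disjoint U₁ (vseq Fam m)}, EMetric.diam T'') / 2 <
          ⨆ T'' ∈ {U₁ : Set X | U₁ ∈ Fam ∧ ∀ m, m < j →
            Disjoint U₁ (vseq Fam m)}, EMetric.diam T'' :=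
        ENNReal.half_lt_self hspos.ne' (hsle.trans_lt hΔtop.lt_top).ne
      obtain ⟨T₀, hT₀⟩ := lt_iSup_iff.1 hhalf
      obtain ⟨hmem₀, hlt₀⟩ := lt_iSup_iff.1 hT₀
      have hspec := vseq_spec Fam hmem₀ hlt₀
      exact ⟨hspec.1, lt_of_le_of_lt (ENNReal.div_le_div_right hT'le 2) hspec.2⟩
    have hcover : ∀ N : ℕ, A'' ⊆ ⋃ i, (if i < N then G i else E i) := by
      intro N x hx
      set C : Set X := ⋃ i ∈ Finset.range N, G i with hCdef
      by_cases hxC : x ∈ C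
      · rw [hCdef, mem_iUnion₂] at hxC
        obtain ⟨i, hiN, hxi⟩ := hxC
        exact mem_iUnion.2 ⟨i, by rw [if_pos (Finset.mem_range.1 hiN)]; exact hxi⟩
      · have hCc : IsClosed C := isClosed_biUnion_finset fun i _ => hGclosed i
        have hinf : 0 < EMetric.infEdist x C := by
          exact EMetric.infEdist_pos_iff_notMem_closure.2 (by rw [hCc.closure_eq]; exact hxC)
        obtain ⟨T', hT'F, hxT', hT'd⟩ := hfine x hx _ hinf
        have hT'C : ∀ i, i < N → Disjoint T' (G i) := by
          intro i hiN
          rw [Set.disjoint_left]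
          intro y hyT' hyG
          have h1 : EMetric.infEdist x C ≤ edist x y :=
            EMetric.infEdist_le_edist_of_mem (mem_iUnion₂.2 ⟨i, Finset.mem_range.2 hiN, hyG⟩)
          have h2 : edist x y ≤ EMetric.diam T' := EMetric.edist_le_diam_of_mem hxT' hyT'
          exact absurd (h1.trans h2) (not_le.2 hT'd)
        by_cases hmeet : ∃ j, ¬ Disjoint T' (G j)
        · have hj : ¬ Disjoint T' (G (Nat.find hmeet)) := Nat.find_spec hmeet
          have hjmin : ∀ m, m < Nat.find hmeet → Disjoint T' (G m) :=
            fun m hm => not_not.1 (Nat.find_min hmeet hm)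
          have hjN : N ≤ Nat.find hmeet := by
            by_contra hcon
            exact hj (hT'C _ (not_le.1 hcon))
          obtain ⟨hspec1, hspec2⟩ := havail T' hT'F (Nat.find hmeet) hjmin
          obtain ⟨w, hwT', hwG⟩ := Set.not_disjoint_iff.1 hj
          have hGne : (G (Nat.find hmeet)).Nonempty := ⟨w, hwG⟩
          refine mem_iUnion.2 ⟨Nat.find hmeet, ?_⟩
          rw [if_neg (not_lt.2 hjN)]
          have hEeq : E (Nat.find hmeet) = closedBall hGne.some
              (3 * (EMetric.diam (G (Nat.find hmeet))).toReal) := by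
            rw [hEdef]; exact dif_pos hGne
          rw [hEeq]
          have hdj_top : EMetric.diam (G (Nat.find hmeet)) ≠ ∞ :=
            ((hGdΔ _).trans_lt hΔtop.lt_top).ne
          have h2d : EMetric.diam T' ≤ 2 * EMetric.diam (G (Nat.find hmeet)) := by
            have h := (ENNReal.div_lt_iff (Or.inl (two_ne_zero (α := ℝ≥0∞)))
              (Or.inl ENNReal.ofNat_ne_top)).1 hspec2
            rw [mul_comm] at h
            exact h.le
          have hdist : edist x hGne.some ≤ 3 * EMetric.diam (G (Nat.find hmeet)) := by
            calc edist x hGne.some ≤ edist x w + edist w hGne.some := edist_triangle _ _ _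
              _ ≤ EMetric.diam T' + EMetric.diam (G (Nat.find hmeet)) :=
                add_le_add (EMetric.edist_le_diam_of_mem hxT' hwT')
                  (EMetric.edist_le_diam_of_mem hwG hGne.some_mem)
              _ ≤ 2 * EMetric.diam (G (Nat.find hmeet)) +
                  EMetric.diam (G (Nat.find hmeet)) := add_le_add_left h2d _
              _ = 3 * EMetric.diam (G (Nat.find hmeet)) := by ring
          rw [mem_closedBall, dist_edist]
          have h3top : (3:ℝ≥0∞) * EMetric.diam (G (Nat.find hmeet)) ≠ ∞ :=
            ENNReal.mul_ne_top (by simp) hdj_top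
          have htr := ENNReal.toReal_mono h3top hdist
          rwa [ENNReal.toReal_mul, (by simp : ((3:ℝ≥0∞)).toReal = 3)] at htr
        · exfalso
          push_neg at hmeet
          have hd0 : 0 < EMetric.diam T' := hT'F.2.2.2.1
          have hdT'top : EMetric.diam T' ≠ ∞ := (hT'F.2.2.1.trans_lt hΔtop.lt_top).ne
          have hdhalf0 : EMetric.diam T' / 2 ≠ 0 :=
            (ENNReal.div_pos hd0.ne' ENNReal.ofNat_ne_top).ne'
          have hdhalftop : EMetric.diam T' / 2 ≠ ∞ :=
            (ENNReal.div_lt_top hdT'top (two_ne_zero (α := ℝ≥0∞))).ne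
          have hm₀pos : (0:ℝ≥0∞) < lam * (c * (EMetric.diam T' / 2) ^ α) := by
            refine ENNReal.mul_pos hlam0 ?_
            exact (ENNReal.mul_pos hc.ne' (ENNReal.rpow_pos
              (pos_iff_ne_zero.2 hdhalf0) hdhalftop).ne').ne'
          have hm₀le : ∀ j : ℕ, lam * (c * (EMetric.diam T' / 2) ^ α) ≤ μ (G j) := by
            intro j
            obtain ⟨hspec1, hspec2⟩ := havail T' hT'F j (fun m _ => hmeet m)
            have hζ : c * (EMetric.diam T' / 2) ^ α ≤ sizeDiam c α (G j) :=
              mul_le_mul_right (ENNReal.rpow_le_rpow hspec2.le hα.le) c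
            calc lam * (c * (EMetric.diam T' / 2) ^ α) ≤ lam * sizeDiam c α (G j) :=
                mul_le_mul_right hζ _
              _ ≤ μ (G j) := hspec1.1.2.2.2.2.1
          obtain ⟨K, hK⟩ := ENNReal.exists_nat_gt
            ((ENNReal.div_lt_top hμWfin hm₀pos.ne').ne)
          have hKle : (K : ℝ≥0∞) * (lam * (c * (EMetric.diam T' / 2) ^ α)) ≤ μ W := by
            calc (K : ℝ≥0∞) * (lam * (c * (EMetric.diam T' / 2) ^ α))
                = ∑ _i ∈ Finset.range K, (lam * (c * (EMetric.diam T' / 2) ^ α)) := by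
                  rw [Finset.sum_const, Finset.card_range, nsmul_eq_mul]
              _ ≤ ∑ i ∈ Finset.range K, μ (G i) := Finset.sum_le_sum fun i _ => hm₀le i
              _ ≤ ∑' i, μ (G i) := ENNReal.sum_le_tsum _
              _ ≤ μ W := hGsum
          have hWlt : μ W < (K:ℝ≥0∞) * (lam * (c * (EMetric.diam T' / 2) ^ α)) := by
            rw [ENNReal.div_lt_iff (Or.inl hm₀pos.ne') (Or.inr hμWfin)] at hK
            exact hK
          exact absurd hKle (not_le.2 hWlt)
    have hcost : ∀ N : ℕ, OuterMeasure.mkMetric'.pre (mS c α) r A'' ≤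
        lam⁻¹ * μ W + ((6:ℝ≥0∞) ^ α * lam⁻¹) * ∑' k, μ (G (k + N)) := by
      intro N
      have hle1 : OuterMeasure.mkMetric'.pre (mS c α) r A'' ≤
          ∑' i, ⨆ _ : ((if i < N then G i else E i) : Set X).Nonempty,
            extend (fun s (_ : EMetric.diam s ≤ r) => mS (X := X) c α s)
              (if i < N then G i else E i) := by
        rw [OuterMeasure.mkMetric'.pre, OuterMeasure.boundedBy_apply]
        exact iInf₂_le (fun i => if i < N then G i else E i) (hcover N)
      have hterm : ∀ i, (⨆ _ : ((if i < N then G i else E i) : Set X).Nonempty,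
          extend (fun s (_ : EMetric.diam s ≤ r) => mS (X := X) c α s)
            (if i < N then G i else E i))
          ≤ lam⁻¹ * μ (G i) + (if i < N then 0 else ((6:ℝ≥0∞) ^ α * lam⁻¹) * μ (G i)) := by
        intro i
        by_cases hiN : i < N
        · rw [if_pos hiN, if_pos hiN]
          rcases hGface i with h|h
          · rw [h]; simp
          · have hne : (G i).Nonempty := nonempty_of_measure_ne_zero h.2.2.2.2.2.ne'
            rw [iSup_pos hne]
            have hdle : EMetric.diam (G i) ≤ r :=
              (hGdΔ i).trans (le_trans (le_mul_of_one_le_left (zero_le)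
                (by norm_num : (1:ℝ≥0∞) ≤ 6)) h6Δ)
            have hext : extend (fun s (_ : EMetric.diam s ≤ r) => mS (X := X) c α s) (G i)
                = mS c α (G i) :=
              @extend_eq (Set X) (fun s => EMetric.diam s ≤ r) (fun s _ => mS c α s) (G i) hdle
            rw [hext, mS_le_of_ball h.1]
            exact (hGμ i).trans le_self_add
        · rw [if_neg hiN, if_neg hiN]
          rcases hGface i with h|h
          · have hEe : E i = ∅ := by
              rw [hEdef]
              refine dif_neg ?_
              rw [h]; exact not_nonempty_empty
            rw [hEe]; simp
          · have hne : (G i).Nonempty := nonempty_of_measure_ne_zero h.2.2.2.2.2.ne'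
            have hdpos : 0 < EMetric.diam (G i) := h.2.2.2.1
            have hdtop : EMetric.diam (G i) ≠ ∞ := ((hGdΔ i).trans_lt hΔtop.lt_top).ne
            have hEi : E i = closedBall hne.some (3 * (EMetric.diam (G i)).toReal) := by
              rw [hEdef]; exact dif_pos hne
            have hrpos : (0:ℝ) < 3 * (EMetric.diam (G i)).toReal :=
              mul_pos (by norm_num) (ENNReal.toReal_pos hdpos.ne' hdtop)
            have hEball : E i ∈ closedBallsF X := ⟨hne.some, _, hrpos, hEi⟩
            have hdE : EMetric.diam (E i) ≤ 6 * EMetric.diam (G i) := by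
              rw [hEi, ← emetric_closedBall hrpos.le]
              refine le_trans EMetric.diam_closedBall ?_
              rw [ENNReal.ofReal_mul (by norm_num : (0:ℝ) ≤ 3), ENNReal.ofReal_toReal hdtop,
                (by norm_num : ENNReal.ofReal (3:ℝ) = (3:ℝ≥0∞)), ← mul_assoc]
              norm_num
            have hdler : EMetric.diam (E i) ≤ r :=
              hdE.trans (le_trans (mul_le_mul_right (hGdΔ i) 6) h6Δ)
            have hext : extend (fun s (_ : EMetric.diam s ≤ r) => mS (X := X) c α s) (E i)
                = mS c α (E i) :=
              @extend_eq (Set X) (fun s => EMetric.diam s ≤ r) (fun s _ => mS c α s) (E i) hdler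
            refine le_trans (iSup_le fun _ => le_of_eq hext) ?_
            rw [mS_le_of_ball hEball]
            have hsz : sizeDiam c α (E i) ≤ (6:ℝ≥0∞)^α * sizeDiam c α (G i) := by
              unfold sizeDiam
              calc c * EMetric.diam (E i) ^ α ≤ c * ((6:ℝ≥0∞) * EMetric.diam (G i)) ^ α :=
                    mul_le_mul_right (ENNReal.rpow_le_rpow hdE hα.le) c
                _ = (6:ℝ≥0∞)^α * (c * EMetric.diam (G i) ^ α) := by
                    rw [ENNReal.mul_rpow_of_nonneg _ _ hα.le]; ring
            refine le_trans hsz ?_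
            refine le_trans (mul_le_mul_right (hGμ i) ((6:ℝ≥0∞)^α)) ?_
            rw [← mul_assoc]
            exact le_add_self
      calc OuterMeasure.mkMetric'.pre (mS c α) r A''
          ≤ ∑' i, ⨆ _ : ((if i < N then G i else E i) : Set X).Nonempty,
            extend (fun s (_ : EMetric.diam s ≤ r) => mS (X := X) c α s)
              (if i < N then G i else E i) := hle1
        _ ≤ ∑' i, (lam⁻¹ * μ (G i) +
              (if i < N then 0 else ((6:ℝ≥0∞) ^ α * lam⁻¹) * μ (G i))) :=
            Summable.tsum_le_tsum hterm ENNReal.summable ENNReal.summable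
        _ = (∑' i, lam⁻¹ * μ (G i)) +
              ∑' i, (if i < N then 0 else ((6:ℝ≥0∞) ^ α * lam⁻¹) * μ (G i)) :=
            ENNReal.tsum_add
        _ ≤ lam⁻¹ * μ W + ((6:ℝ≥0∞) ^ α * lam⁻¹) * ∑' k, μ (G (k + N)) := by
            refine add_le_add ?_ ?_
            · rw [ENNReal.tsum_mul_left]; exact mul_le_mul_right hGsum _
            · refine le_trans (tsum_tail_le (fun i => ((6:ℝ≥0∞) ^ α * lam⁻¹) * μ (G i)) N) ?_
              rw [ENNReal.tsum_mul_left]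
    have htail0 : Tendsto (fun N => ∑' k, μ (G (k + N))) atTop (𝓝 0) :=
      ENNReal.tendsto_sum_nat_add _ (lt_of_le_of_lt hGsum (lt_top_iff_ne_top.2 hμWfin)).ne
    have hlim : Tendsto (fun N => lam⁻¹ * μ W + ((6:ℝ≥0∞)^α * lam⁻¹) * ∑' k, μ (G (k + N)))
        atTop (𝓝 (lam⁻¹ * μ W)) := by
      have h66 : (6:ℝ≥0∞)^α * lam⁻¹ ≠ ∞ :=
        ENNReal.mul_ne_top (ENNReal.rpow_ne_top_of_nonneg hα.le (by simp))
          (ENNReal.inv_ne_top.2 hlam0)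
      have h2 := ENNReal.Tendsto.const_mul (a := (6:ℝ≥0∞)^α * lam⁻¹) htail0 (Or.inr h66)
      have h3 := (tendsto_const_nhds (x := lam⁻¹ * μ W) (f := atTop)).add h2
      simpa using h3
    exact ge_of_tendsto hlim (Eventually.of_forall hcost)
  -- conclude
  have hA''fin : μ A'' ≠ ∞ :=
    ((measure_mono hA''U).trans_lt (lt_top_iff_ne_top.2 hUfin)).ne
  have hψA'' : ψ A'' ≤ lam⁻¹ * μ A'' := by
    refine ENNReal.le_of_forall_pos_le_add fun ε' hε' hlt => ?_
    have hkey := key (lam * (ε' : ℝ≥0∞)) (mul_ne_zero hlam0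
      (by exact_mod_cast hε'.ne'))
    calc ψ A'' ≤ lam⁻¹ * (μ A'' + lam * ε') := hkey
      _ = lam⁻¹ * μ A'' + lam⁻¹ * (lam * ε') := by rw [mul_add]
      _ = lam⁻¹ * μ A'' + ε' := by
          rw [← mul_assoc, ENNReal.inv_mul_cancel hlam0 hlamtop, one_mul]
  calc lam * ψ A' ≤ lam * (lam⁻¹ * μ A'') := mul_le_mul_right (hψA'.trans hψA'') _
    _ = μ A'' := by rw [← mul_assoc, ENNReal.mul_inv_cancel hlam0 hlamtop, one_mul]
    _ ≤ μ A' := measure_mono diff_subset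

end Aux4

section Aux5
variable [MetricSpace X] [MeasurableSpace X] [BorelSpace X]

/-- Local finiteness from finite upper spherical density. -/
lemma loc_finite (μ : Measure X) {c : ℝ≥0∞} {α : ℝ} (hα : 0 < α) (hc : 0 < c) (hc' : c < ∞)
    {β : ℝ≥0∞} (hβ : β < ∞) {x : X} (hx : upperSphDensity μ c α x = β) :
    ∃ ρ : ℝ, 0 < ρ ∧ μ (closedBall x ρ) < ∞ := by
  have hlt : Filter.limsup
      (fun r : ℝ => μ (Metric.closedBall x r) / (c * ENNReal.ofReal (2 * r) ^ α)) (𝓝[>] 0)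
      < β + 1 := by
    rw [← upperSphDensity, hx]; exact lt_add_right hβ.ne one_ne_zero
  have hev := Filter.eventually_lt_of_limsup_lt hlt
  obtain ⟨r, hr, hr0⟩ := (hev.and self_mem_nhdsWithin).exists
  refine ⟨r, hr0, ?_⟩
  have hd0 : c * ENNReal.ofReal (2 * r) ^ α ≠ 0 := by
    refine mul_ne_zero hc.ne' ?_
    exact (ENNReal.rpow_pos (ENNReal.ofReal_pos.2 (by linarith)) ENNReal.ofReal_ne_top).ne'
  have hdtop : c * ENNReal.ofReal (2 * r) ^ α ≠ ∞ :=
    ENNReal.mul_ne_top hc'.ne (ENNReal.rpow_ne_top_of_nonneg hα.le ENNReal.ofReal_ne_top)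
  have hfin := (ENNReal.div_lt_iff (Or.inl hd0) (Or.inl hdtop)).1 hr
  refine hfin.trans ?_
  exact ENNReal.mul_lt_top (ENNReal.add_lt_top.2 ⟨hβ, ENNReal.one_lt_top⟩)
    (lt_top_iff_ne_top.2 hdtop)

end Aux5

section Aux6
variable [MetricSpace X] [MeasurableSpace X] [BorelSpace X]

lemma cover_at_scale {c : ℝ≥0∞} {α : ℝ} {A : Set X}
    (hfin : psiM (closedBallsF X) (sizeDiam c α) A < ∞) (n : ℕ) :
    ∃ t : ℕ → Set X, A ⊆ (⋃ i, t i) ∧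
      ∀ i, (t i).Nonempty → EMetric.diam (t i) ≤ (((n : ℝ≥0∞)) + 1)⁻¹ := by
  have hr : (0:ℝ≥0∞) < ((n:ℝ≥0∞) + 1)⁻¹ :=
    ENNReal.inv_pos.2 (ENNReal.add_ne_top.2 ⟨ENNReal.natCast_ne_top n, ENNReal.one_ne_top⟩)
  have hb := (pre_le_psiM (c := c) (α := α) hr A).trans_lt hfin
  rw [OuterMeasure.mkMetric'.pre, OuterMeasure.boundedBy_apply] at hb
  rw [iInf_lt_iff] at hb
  obtain ⟨t, hb⟩ := hb
  rw [iInf_lt_iff] at hb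
  obtain ⟨hcov, hb⟩ := hb
  refine ⟨t, hcov, fun i hne => ?_⟩
  by_contra hd
  have h1 : (⨆ _ : (t i).Nonempty, extend
      (fun s (_ : EMetric.diam s ≤ ((n:ℝ≥0∞) + 1)⁻¹) => mS (X := X) c α s) (t i)) = ∞ := by
    rw [iSup_pos hne]
    exact @extend_eq_top (Set X) (fun s => EMetric.diam s ≤ ((n:ℝ≥0∞) + 1)⁻¹)
      (fun s _ => mS c α s) (t i) hd
  have h2 := ENNReal.le_tsum
    (f := fun i => ⨆ _ : (t i).Nonempty, extend
      (fun s (_ : EMetric.diam s ≤ ((n:ℝ≥0∞) + 1)⁻¹) => mS (X := X) c α s) (t i)) i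
  rw [h1] at h2
  exact absurd (h2.trans_lt hb) (by simp)

lemma alpha_psi_le_mu (μ : Measure X) {c : ℝ≥0∞} {α : ℝ} (hα : 0 < α) (hc : 0 < c)
    (hc' : c < ∞) {A : Set X} (hA : MeasurableSet A) {β α₀ : ℝ≥0∞} (hβ : β < ∞)
    (hα₀ : α₀ < ∞)
    (hup : ∀ x ∈ A, upperSphDensity μ c α x = β)
    (hfed : ∀ x ∈ A, fedDensity μ (closedBallsF X) (sizeDiam c α) x = α₀)
    (hfin : psiM (closedBallsF X) (sizeDiam c α) A < ∞) :
    α₀ * psiM (closedBallsF X) (sizeDiam c α) A ≤ μ A := by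
  classical
  set ψ := psiM (closedBallsF X) (sizeDiam c α) with hψdef
  rcases eq_empty_or_nonempty A with rfl | hAne
  · simp
  choose tt htcov htdiam using fun n => cover_at_scale (c := c) (α := α) hfin n
  set D : Set X := ⋃ (n : ℕ) (i : ℕ),
    (if h : (A ∩ tt n i).Nonempty then ({h.some} : Set X) else ∅) with hD
  have hDc : D.Countable := by
    refine countable_iUnion fun n => countable_iUnion fun i => ?_
    split
    · exact countable_singleton _
    · exact countable_empty
  have hdense : ∀ x ∈ A, ∀ η : ℝ≥0∞, 0 < η → ∃ d ∈ D, edist x d < η := by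
    intro x hx η hη
    obtain ⟨n, hn⟩ := ENNReal.exists_inv_nat_lt hη.ne'
    obtain ⟨i, hi⟩ := mem_iUnion.1 (htcov n hx)
    have hne : (A ∩ tt n i).Nonempty := ⟨x, hx, hi⟩
    refine ⟨hne.some, ?_, ?_⟩
    · rw [hD]
      exact mem_iUnion.2 ⟨n, mem_iUnion.2 ⟨i, by rw [dif_pos hne]; exact mem_singleton _⟩⟩
    · have h1 : edist x hne.some ≤ EMetric.diam (tt n i) :=
        EMetric.edist_le_diam_of_mem hi hne.some_mem.2
      have h2 : EMetric.diam (tt n i) ≤ ((n:ℝ≥0∞) + 1)⁻¹ := htdiam n i ⟨x, hi⟩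
      have h3 : ((n:ℝ≥0∞) + 1)⁻¹ ≤ ((n:ℝ≥0∞))⁻¹ := ENNReal.inv_le_inv.2 le_self_add
      exact lt_of_le_of_lt (h1.trans (h2.trans h3)) hn
  have hDA : D ⊆ A := by
    intro d hd
    rw [hD] at hd
    simp only [mem_iUnion] at hd
    obtain ⟨n, i, hdm⟩ := hd
    by_cases h : (A ∩ tt n i).Nonempty
    · rw [dif_pos h, mem_singleton_iff] at hdm
      rw [hdm]; exact h.some_mem.1
    · rw [dif_neg h] at hdm; exact absurd hdm (notMem_empty d)
  have hDne : D.Nonempty := by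
    obtain ⟨x, hx⟩ := hAne
    obtain ⟨d, hd, -⟩ := hdense x hx 1 one_pos
    exact ⟨d, hd⟩
  obtain ⟨g, hg⟩ := hDc.exists_eq_range hDne
  set Vs : ℕ → Set X := fun m =>
    if μ (ball (g m.unpair.1) (2 / (m.unpair.2 + 1))) ≠ ∞ then
      ball (g m.unpair.1) (2 / (m.unpair.2 + 1)) else ∅ with hVs
  have hVso : ∀ m, IsOpen (Vs m) := by
    intro m; rw [hVs]; dsimp only; split
    · exact isOpen_ball
    · exact isOpen_empty
  have hVsfin : ∀ m, μ (Vs m) ≠ ∞ := by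
    intro m; rw [hVs]; dsimp only; split
    · assumption
    · simp
  have hVscov : A ⊆ ⋃ m, Vs m := by
    intro x hx
    obtain ⟨R, hR0, hRfin⟩ := loc_finite μ hα hc hc' hβ (hup x hx)
    obtain ⟨k, hk⟩ := exists_nat_one_div_lt (by positivity : (0:ℝ) < R / 4)
    obtain ⟨d, hdD, hdx⟩ := hdense x hx (ENNReal.ofReal (1 / (k + 1)))
      (ENNReal.ofReal_pos.2 (by positivity))
    have hdD' : d ∈ range g := hg ▸ hdD
    obtain ⟨j, hj⟩ := hdD'
    have hdx' : dist x d < 1 / (k + 1) := edist_lt_ofReal.1 hdx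
    have hk1 : (0:ℝ) < (k:ℝ) + 1 := by positivity
    have hballsub : ball d (2 / ((k:ℝ) + 1)) ⊆ closedBall x R := by
      intro y hy
      rw [mem_closedBall]
      have h1 : dist y d < 2 / ((k:ℝ) + 1) := mem_ball.1 hy
      have h2 : dist y x ≤ dist y d + dist d x := dist_triangle _ _ _
      have h3 : dist d x < 1 / ((k:ℝ) + 1) := by rwa [dist_comm]
      have hk' : 1 / ((k:ℝ) + 1) < R / 4 := hk
      have h4 : dist y x < 3 / ((k:ℝ) + 1) := by
        calc dist y x ≤ dist y d + dist d x := h2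
          _ < 2 / ((k:ℝ) + 1) + 1 / ((k:ℝ) + 1) := by linarith
          _ = 3 / ((k:ℝ) + 1) := by ring
      have h5 : 3 / ((k:ℝ) + 1) = 3 * (1 / ((k:ℝ) + 1)) := by ring
      rw [h5] at h4
      linarith
    have hballfin : μ (ball d (2 / ((k:ℝ) + 1))) ≠ ∞ :=
      ((measure_mono hballsub).trans_lt hRfin).ne
    refine mem_iUnion.2 ⟨Nat.pair j k, ?_⟩
    rw [hVs]; dsimp only
    rw [Nat.unpair_pair]; dsimp only
    rw [hj, if_pos hballfin, mem_ball]
    calc dist x d < 1 / ((k:ℝ) + 1) := hdx'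
      _ < 2 / ((k:ℝ) + 1) := by
        rw [div_lt_div_iff₀ hk1 hk1]; nlinarith
  set An : ℕ → Set X := fun n => (A ∩ Vs n) \ ⋃ (m : ℕ) (_ : m < n), Vs m with hAn
  have hAnm : ∀ n, MeasurableSet (An n) := fun n =>
    (hA.inter (hVso n).measurableSet).diff
      (MeasurableSet.iUnion fun m => MeasurableSet.iUnion fun _ => (hVso m).measurableSet)
  have hAnd : Pairwise (Function.onFun Disjoint An) := by
    have key : ∀ a b : ℕ, a < b → Disjoint (An a) (An b) := by
      intro a b hab
      rw [Set.disjoint_left]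
      intro x hxa hxb
      exact hxb.2 (mem_iUnion₂.2 ⟨a, hab, hxa.1.2⟩)
    intro a b hab
    rcases lt_or_gt_of_ne hab with h | h
    · exact key a b h
    · exact (key b a h).symm
  have hAeq : A = ⋃ n, An n := by
    apply Subset.antisymm
    · intro x hx
      have hex : ∃ n, x ∈ Vs n := mem_iUnion.1 (hVscov hx)
      refine mem_iUnion.2 ⟨Nat.find hex, ⟨⟨hx, Nat.find_spec hex⟩, ?_⟩⟩
      intro hcon
      obtain ⟨m, hm, hxm⟩ := mem_iUnion₂.1 hcon
      exact absurd hxm (Nat.find_min hex hm)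
    · exact iUnion_subset fun n x hx => hx.1.1
  have hmain : ∀ lam : ℝ≥0∞, lam < α₀ → lam ≠ 0 → lam ≠ ∞ → lam * ψ A ≤ μ A := by
    intro lam h1 h2 h3
    have hAn_sub : ∀ n, An n ⊆ A := fun n x hx => hx.1.1
    have hAn_Vs : ∀ n, An n ⊆ Vs n := fun n x hx => hx.1.2
    calc lam * ψ A = lam * ∑' n, ψ (An n) := by
          rw [hAeq, measure_iUnion hAnd hAnm]
      _ = ∑' n, lam * ψ (An n) := (ENNReal.tsum_mul_left).symm
      _ ≤ ∑' n, μ (An n) := by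
          refine Summable.tsum_le_tsum (fun n => ?_) ENNReal.summable ENNReal.summable
          exact lower_piece μ hα hc hc' (hAnm n) (hAn_sub n) (hAn_Vs n) (hVso n)
            (hVsfin n) h1 h2 h3 hfed
      _ = μ A := by rw [← measure_iUnion hAnd hAnm, ← hAeq]
  by_contra hcon
  rw [not_le] at hcon
  have hψ0 : ψ A ≠ 0 := by
    intro h; rw [h, mul_zero] at hcon; exact absurd hcon (by simp)
  have hψtop : ψ A ≠ ∞ := hfin.ne
  have hdivlt : μ A / ψ A < α₀ := by
    rw [ENNReal.div_lt_iff (Or.inl hψ0) (Or.inl hψtop)]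
    exact hcon
  obtain ⟨lam, hl1, hl2⟩ := exists_between hdivlt
  have hlam0 : lam ≠ 0 := (lt_of_le_of_lt (zero_le) hl1).ne'
  have hlamtop : lam ≠ ∞ := (hl2.trans hα₀).ne
  have hle := hmain lam hl2 hlam0 hlamtop
  have hgt : μ A < lam * ψ A := (ENNReal.div_lt_iff (Or.inl hψ0) (Or.inl hψtop)).1 hl1
  exact absurd hle (not_le.2 hgt)

end Aux6


/-- If on `A` the upper centered density is a constant `β` while the
Federer density is a constant `α₀` with `0 < β < α₀`, and `0 < S^α(A) < ∞` with
`μ⌊A ≪ S^α⌊A`, then `μ(A) = α₀ S^α(A) > t S^α(A)` for every `t ∈ (β, α₀)`; in particular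
the constant `1` cannot replace `2^m` in Federer 2.10.19(1), even for the spherical
Hausdorff measure. -/
theorem stmt16 [MetricSpace X] [MeasurableSpace X] [BorelSpace X]
    (μ : Measure X) (hreg : BorelRegular μ)
    (α : ℝ) (hα : 0 < α) (c : ℝ≥0∞) (hc : 0 < c) (hc' : c < ∞)
    (A : Set X) (hA : MeasurableSet A)
    (hfine : ∀ x ∈ A, Fine (adm μ (closedBallsF X) (sizeDiam c α)) x)
    (hfin : psiM (closedBallsF X) (sizeDiam c α) A < ∞)
    (hpos : 0 < psiM (closedBallsF X) (sizeDiam c α) A)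
    (habs : μ.restrict A ≪ (psiM (closedBallsF X) (sizeDiam c α)).restrict A)
    (β α₀ : ℝ≥0∞) (hβ : 0 < β) (hβα : β < α₀) (hα₀ : α₀ < ∞)
    (hup : ∀ x ∈ A, upperSphDensity μ c α x = β)
    (hfed : ∀ x ∈ A, fedDensity μ (closedBallsF X) (sizeDiam c α) x = α₀) :
    μ A = α₀ * psiM (closedBallsF X) (sizeDiam c α) A ∧
    ∀ t : ℝ≥0∞, β < t → t < α₀ →
      t * psiM (closedBallsF X) (sizeDiam c α) A < μ A := by
  have hβtop : β < ∞ := hβα.trans hα₀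
  have h1 : μ A ≤ α₀ * psiM (closedBallsF X) (sizeDiam c α) A :=
    mu_le_alpha_psi μ hα₀ hfed hfin hpos
  have h2 : α₀ * psiM (closedBallsF X) (sizeDiam c α) A ≤ μ A :=
    alpha_psi_le_mu μ hα hc hc' hA hβtop hα₀ hup hfed hfin
  have heq : μ A = α₀ * psiM (closedBallsF X) (sizeDiam c α) A := le_antisymm h1 h2
  refine ⟨heq, fun t hβt htα₀ => ?_⟩
  rw [heq]
  exact ENNReal.mul_lt_mul_left hpos.ne' hfin.ne htα₀
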